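/- arXiv:1902.05754 — 3 statements merged into one kernel-verified Lean document; each statement's English description precedes it below -/
import Mathlib

section
/- Let d ≥ 1 and let f : ℝ^d → ℝ be L_f-Lipschitz. For ρ > 0 define the regularized potential f_ρ(θ) := −log ∫_{ℝ^d} exp(−f(z) − ‖z − θ‖₂²/(2ρ²)) dz + (d/2) log(2πρ²). Then for all θ ∈ ℝ^d, log N_ρ − log D_{−d}(−L_f ρ) ≤ f_ρ(θ) − f(θ) ≤ log N_ρ − log D_{−d}(L_f ρ), where N_ρ := 2^{d/2−1} Γ(d/2) / (Γ(d) exp(L_f² ρ²/4)). -/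
open MeasureTheory

noncomputable section

/-- ℝ^d with the Euclidean (ℓ²) structure. -/
abbrev En (d : ℕ) := EuclideanSpace ℝ (Fin d)

/-- The parabolic cylinder function
`D_{−d}(z) = (exp(−z²/4)/Γ(d)) ∫₀^∞ exp(−xz − x²/2) x^{d−1} dx`. -/
noncomputable def pcf (d : ℕ) (z : ℝ) : ℝ :=
  (Real.exp (-z ^ 2 / 4) / Real.Gamma d) *
    ∫ x in Set.Ioi (0 : ℝ), Real.exp (-(x * z) - x ^ 2 / 2) * x ^ (d - 1)

/-- The normalized density `π(θ) = exp(−f(θ))/C_π`. -/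
noncomputable def nrmDensity {d : ℕ} (f : En d → ℝ) (θ : En d) : ℝ :=
  Real.exp (-f θ) / ∫ θ' : En d, Real.exp (-f θ')

/-- The normalized Gaussian-smoothed density
`π_ρ(θ) = (1/C_{π_ρ}) ∫ exp(−f(z) − ‖z−θ‖²/(2ρ²)) dz`. -/
noncomputable def gaussSmoothed {d : ℕ} (f : En d → ℝ) (ρ : ℝ) (θ : En d) : ℝ :=
  (∫ z : En d, Real.exp (-f z - ‖z - θ‖ ^ 2 / (2 * ρ ^ 2))) /
    ∫ θ' : En d, ∫ z : En d, Real.exp (-f z - ‖z - θ'‖ ^ 2 / (2 * ρ ^ 2))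

open Real Set

lemma aux_pow_le_exp (n : ℕ) {x : ℝ} (hx : 0 ≤ x) : x ^ n ≤ (n.factorial : ℝ) * Real.exp x := by
  have h := Real.sum_le_exp_of_nonneg hx (n+1)
  have h2 : x ^ n / (n.factorial : ℝ) ≤ ∑ i ∈ Finset.range (n+1), x ^ i / i.factorial :=
    Finset.single_le_sum (f := fun i => x ^ i / (i.factorial : ℝ)) (fun i _ => by positivity)
      (Finset.self_mem_range_succ n)
  have hn : (0:ℝ) < (n.factorial : ℝ) := by positivity
  calc x ^ n = (x ^ n / (n.factorial : ℝ)) * n.factorial := by field_simp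
    _ ≤ Real.exp x * n.factorial := mul_le_mul_of_nonneg_right (h2.trans h) hn.le
    _ = (n.factorial : ℝ) * Real.exp x := by ring

lemma aux_int1d (n : ℕ) (a : ℝ) :
    IntegrableOn (fun x : ℝ => Real.exp (a * x - x ^ 2 / 2) * x ^ n) (Set.Ioi 0) := by
  have hg : Integrable (fun x : ℝ =>
      ((n.factorial : ℝ) * Real.exp ((a+1)^2/2)) * Real.exp (-(1/2) * (x - (a+1))^2)) :=
    (((integrable_exp_neg_mul_sq (by norm_num : (0:ℝ) < 1/2)).comp_sub_right (a+1)).const_mul _)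
  refine (hg.integrableOn).mono' ?_ ?_
  · exact (((Real.continuous_exp.comp (by continuity)).mul (continuous_pow n))).aestronglyMeasurable
  · filter_upwards [ae_restrict_mem measurableSet_Ioi] with x hx
    have hx0 : (0:ℝ) < x := hx
    rw [Real.norm_eq_abs, abs_mul, abs_of_pos (Real.exp_pos _), abs_pow, abs_of_pos hx0]
    calc Real.exp (a*x - x^2/2) * x ^ n
        ≤ Real.exp (a*x - x^2/2) * ((n.factorial : ℝ) * Real.exp x) :=
          mul_le_mul_of_nonneg_left (aux_pow_le_exp n hx0.le) (Real.exp_pos _).le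
      _ = ((n.factorial : ℝ) * Real.exp ((a+1)^2/2)) * Real.exp (-(1/2) * (x - (a+1))^2) := by
          rw [mul_left_comm, ← Real.exp_add, mul_assoc, ← Real.exp_add]
          congr 1
          ring

lemma aux_int1d_pos (n : ℕ) (a : ℝ) :
    0 < ∫ x in Set.Ioi (0:ℝ), Real.exp (a * x - x ^ 2 / 2) * x ^ n := by
  rw [setIntegral_pos_iff_support_of_nonneg_ae]
  · have hsub : Set.Ioi (0:ℝ) ⊆ Function.support fun x => Real.exp (a * x - x ^ 2 / 2) * x ^ n := by
      intro x hx
      have hx0 : (0:ℝ) < x := hx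
      simp only [Function.mem_support]
      positivity
    rw [Set.inter_eq_self_of_subset_right hsub, Real.volume_Ioi]
    simp
  · filter_upwards [ae_restrict_mem measurableSet_Ioi] with x hx
    have hx0 : (0:ℝ) < x := hx
    positivity
  · exact aux_int1d n a

lemma aux_pcf_integral (d : ℕ) (z : ℝ) :
    (∫ x in Set.Ioi (0 : ℝ), Real.exp (-(x * z) - x ^ 2 / 2) * x ^ (d - 1))
      = ∫ x in Set.Ioi (0 : ℝ), Real.exp ((-z) * x - x ^ 2 / 2) * x ^ (d - 1) := by
  congr 1 with x
  ring_nf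

lemma aux_pcf_pos {d : ℕ} (hd : 1 ≤ d) (z : ℝ) : 0 < pcf d z := by
  have hΓ : 0 < Real.Gamma d :=
    Real.Gamma_pos_of_pos (by exact_mod_cast Nat.lt_of_lt_of_le Nat.zero_lt_one hd)
  have := aux_int1d_pos (d - 1) (-z)
  rw [pcf, aux_pcf_integral]
  positivity

lemma aux_A_eq_pcf {d : ℕ} (hd : 1 ≤ d) (a : ℝ) :
    ∫ x in Set.Ioi (0:ℝ), Real.exp (a * x - x ^ 2 / 2) * x ^ (d - 1)
      = Real.Gamma d * Real.exp (a ^ 2 / 4) * pcf d (-a) := by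
  have hΓ : 0 < Real.Gamma d :=
    Real.Gamma_pos_of_pos (by exact_mod_cast Nat.lt_of_lt_of_le Nat.zero_lt_one hd)
  rw [pcf, aux_pcf_integral, neg_neg, show (-(-a) ^ 2 : ℝ) = -a^2 by ring]
  rw [show Real.Gamma d * Real.exp (a^2/4) * (Real.exp (-a^2/4) / Real.Gamma d *
      ∫ x in Set.Ioi (0:ℝ), Real.exp (a * x - x ^ 2 / 2) * x ^ (d - 1))
    = (Real.exp (a^2/4) * Real.exp (-a^2/4)) * (Real.Gamma d / Real.Gamma d) *
      ∫ x in Set.Ioi (0:ℝ), Real.exp (a * x - x ^ 2 / 2) * x ^ (d - 1) from by ring]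
  rw [← Real.exp_add, div_self hΓ.ne', show (a^2/4 + -a^2/4 : ℝ) = 0 by ring, Real.exp_zero]
  norm_num

lemma aux_gauss_int {d : ℕ} {b : ℝ} (hb : 0 < b) :
    Integrable (fun v : En d => Real.exp (-b * ‖v‖ ^ 2)) := by
  have h := GaussianFourier.integrable_cexp_neg_mul_sq_norm_add_of_euclideanSpace
    (ι := Fin d) (b := (b:ℂ)) (by simpa using hb) 0 0
  have h2 := h.norm
  refine h2.congr (Filter.Eventually.of_forall fun v => ?_)
  simp only [zero_mul, add_zero, neg_mul]
  rw [Complex.norm_exp]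
  congr 1
  rw [show (-((b:ℂ) * (‖v‖:ℂ)^2)) = ((-(b*‖v‖^2):ℝ):ℂ) by push_cast; ring, Complex.ofReal_re]

lemma aux_J_integrable {d : ℕ} {ρ : ℝ} (hρ : 0 < ρ) (s : ℝ) :
    Integrable (fun z : En d => Real.exp (s * ‖z‖ - ‖z‖ ^ 2 / (2 * ρ ^ 2))) := by
  have hb : (0:ℝ) < 1 / (4 * ρ ^ 2) := by positivity
  refine ((aux_gauss_int hb).const_mul (Real.exp (ρ ^ 2 * s ^ 2))).mono' ?_ ?_
  · exact (Real.continuous_exp.comp (by continuity)).aestronglyMeasurable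
  · refine Filter.Eventually.of_forall fun z => ?_
    rw [Real.norm_eq_abs, abs_of_pos (Real.exp_pos _), ← Real.exp_add, Real.exp_le_exp]
    set t := ‖z‖ with ht
    have h4 : (0:ℝ) < 4 * ρ ^ 2 := by positivity
    have key : ρ^2*s^2 + -(1/(4*ρ^2)) * t^2 - (s*t - t^2/(2*ρ^2))
        = (2*ρ^2*s - t)^2 / (4*ρ^2) := by field_simp; ring
    nlinarith [div_nonneg (sq_nonneg (2*ρ^2*s - t)) h4.le]

lemma aux_J_eq {d : ℕ} (hd : 1 ≤ d) {ρ : ℝ} (hρ : 0 < ρ) (s : ℝ) :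
    ∫ z : En d, Real.exp (s * ‖z‖ - ‖z‖ ^ 2 / (2 * ρ ^ 2))
      = ((d : ℝ) * (volume (Metric.ball (0 : En d) 1)).toReal) *
        (ρ ^ d * ∫ x in Set.Ioi (0:ℝ), Real.exp ((s * ρ) * x - x ^ 2 / 2) * x ^ (d - 1)) := by
  haveI : Nonempty (Fin d) := ⟨⟨0, hd⟩⟩
  haveI : Nontrivial (En d) := by
    refine nontrivial_of_ne (EuclideanSpace.single ⟨0, hd⟩ (1:ℝ)) 0 fun h => ?_
    have := congrArg norm h
    rw [EuclideanSpace.norm_single, norm_zero] at this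
    norm_num at this
  have hpolar := MeasureTheory.integral_fun_norm_addHaar (volume : Measure (En d))
    (fun r => Real.exp (s * r - r ^ 2 / (2 * ρ ^ 2)))
  rw [finrank_euclideanSpace_fin] at hpolar
  rw [hpolar, nsmul_eq_mul, smul_eq_mul]
  have hsub := MeasureTheory.integral_comp_mul_left_Ioi
    (fun r => r ^ (d - 1) • Real.exp (s * r - r ^ 2 / (2 * ρ ^ 2))) 0 hρ
  rw [mul_zero] at hsub
  have heq : ∀ x : ℝ, 0 < x →
      (ρ * x) ^ (d - 1) • Real.exp (s * (ρ * x) - (ρ * x) ^ 2 / (2 * ρ ^ 2))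
        = ρ ^ (d-1) * (Real.exp ((s * ρ) * x - x ^ 2 / 2) * x ^ (d - 1)) := by
    intro x hx
    rw [smul_eq_mul, mul_pow]
    have : s * (ρ * x) - (ρ * x) ^ 2 / (2 * ρ ^ 2) = (s * ρ) * x - x ^ 2 / 2 := by
      field_simp
    rw [this]
    ring
  rw [setIntegral_congr_fun measurableSet_Ioi (fun x hx => heq x hx)] at hsub
  have hrad : (∫ y in Set.Ioi (0:ℝ), y ^ (d - 1) • Real.exp (s * y - y ^ 2 / (2 * ρ ^ 2)))
      = ρ ^ d * ∫ x in Set.Ioi (0:ℝ), Real.exp ((s * ρ) * x - x ^ 2 / 2) * x ^ (d - 1) := by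
    rw [MeasureTheory.integral_const_mul] at hsub
    simp only [smul_eq_mul] at hsub ⊢
    have hpowd : (ρ:ℝ) ^ d = ρ * ρ ^ (d-1) := by
      rw [← pow_succ', Nat.sub_add_cancel hd]
    rw [hpowd, mul_assoc, hsub, ← mul_assoc, mul_inv_cancel₀ hρ.ne', one_mul]
  rw [hrad, measureReal_def]
  ring

lemma aux_NC {d : ℕ} (hd : 1 ≤ d) {L ρ : ℝ} (hρ : 0 < ρ) :
    (2 ^ ((d : ℝ) / 2 - 1) * Real.Gamma ((d : ℝ) / 2) /
        (Real.Gamma d * Real.exp (L ^ 2 * ρ ^ 2 / 4))) *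
      (((d : ℝ) * (volume (Metric.ball (0 : En d) 1)).toReal) * ρ ^ d *
        (Real.Gamma d * Real.exp (L ^ 2 * ρ ^ 2 / 4)))
      = (2 * π * ρ ^ 2) ^ ((d : ℝ) / 2) := by
  haveI : Nonempty (Fin d) := ⟨⟨0, hd⟩⟩
  have hd0 : (0:ℝ) < (d:ℝ) := by exact_mod_cast Nat.lt_of_lt_of_le Nat.zero_lt_one hd
  have hΓ2 : 0 < Real.Gamma ((d:ℝ)/2) := Real.Gamma_pos_of_pos (by positivity)
  have hΓd : 0 < Real.Gamma (d:ℝ) := Real.Gamma_pos_of_pos hd0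
  have hball : (volume (Metric.ball (0 : En d) 1)).toReal
      = Real.sqrt π ^ d / Real.Gamma ((d:ℝ)/2 + 1) := by
    have hΓ3 : 0 < Real.Gamma ((d:ℝ)/2 + 1) := Real.Gamma_pos_of_pos (by positivity)
    rw [EuclideanSpace.volume_ball, Fintype.card_fin, ENNReal.ofReal_one, one_pow, one_mul,
      ENNReal.toReal_ofReal (by positivity)]
  have hΓ1 : Real.Gamma ((d:ℝ)/2 + 1) = ((d:ℝ)/2) * Real.Gamma ((d:ℝ)/2) :=
    Real.Gamma_add_one (by positivity)
  have hsqrt2 : (2:ℝ) ^ ((d:ℝ)/2) = Real.sqrt 2 ^ d := by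
    rw [show ((d:ℝ)/2) = (1/2) * (d:ℝ) by ring, Real.rpow_mul (by norm_num),
      Real.rpow_natCast, ← Real.sqrt_eq_rpow]
  have h2pow : (2:ℝ) ^ ((d:ℝ)/2 - 1) = Real.sqrt 2 ^ d / 2 := by
    rw [Real.rpow_sub (by norm_num), Real.rpow_one, hsqrt2]
  have hrhs : (2 * π * ρ ^ 2 : ℝ) ^ ((d:ℝ)/2)
      = Real.sqrt 2 ^ d * Real.sqrt π ^ d * ρ ^ d := by
    rw [show ((d:ℝ)/2) = (1/2) * (d:ℝ) by ring, Real.rpow_mul (by positivity),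
      Real.rpow_natCast, ← Real.sqrt_eq_rpow]
    rw [Real.sqrt_mul (by positivity), Real.sqrt_mul (by norm_num) π, Real.sqrt_sq hρ.le]
    ring
  rw [hball, hΓ1, h2pow, hrhs]
  have hE : (0:ℝ) < Real.exp (L ^ 2 * ρ ^ 2 / 4) := Real.exp_pos _
  field_simp

/-- Uniform bounds on the regularized potential: for an `L`-Lipschitz potential `f` and
`f_ρ(θ) = −log ∫ exp(−f(z) − ‖z−θ‖²/(2ρ²)) dz + (d/2) log(2πρ²)`, one has
`log N_ρ − log D_{−d}(−Lρ) ≤ f_ρ(θ) − f(θ) ≤ log N_ρ − log D_{−d}(Lρ)` for all `θ`. -/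
theorem statement11 {d : ℕ} (hd : 1 ≤ d) (f : En d → ℝ) (L : ℝ)
    (hLip : ∀ θ η : En d, |f θ - f η| ≤ L * ‖θ - η‖)
    (ρ : ℝ) (hρ : 0 < ρ)
    (N : ℝ) (hN : N = 2 ^ ((d : ℝ) / 2 - 1) * Real.Gamma ((d : ℝ) / 2) /
      (Real.Gamma d * Real.exp (L ^ 2 * ρ ^ 2 / 4)))
    (fρ : En d → ℝ)
    (hfρ : fρ = fun θ => -Real.log (∫ z : En d, Real.exp (-f z - ‖z - θ‖ ^ 2 / (2 * ρ ^ 2))) +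
      ((d : ℝ) / 2) * Real.log (2 * Real.pi * ρ ^ 2))
    (θ : En d) :
    Real.log N - Real.log (pcf d (-(L * ρ))) ≤ fρ θ - f θ ∧
      fρ θ - f θ ≤ Real.log N - Real.log (pcf d (L * ρ)) := by
  have hd0 : (0:ℝ) < (d:ℝ) := by exact_mod_cast Nat.lt_of_lt_of_le Nat.zero_lt_one hd
  have hΓ2 : 0 < Real.Gamma ((d:ℝ)/2) := Real.Gamma_pos_of_pos (by positivity)
  have hΓd : 0 < Real.Gamma (d:ℝ) := Real.Gamma_pos_of_pos hd0
  -- L is nonnegative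
  have hL0 : 0 ≤ L := by
    have h := hLip (EuclideanSpace.single ⟨0, hd⟩ (1:ℝ)) 0
    rw [sub_zero, EuclideanSpace.norm_single] at h
    have h0 := abs_nonneg (f (EuclideanSpace.single ⟨0, hd⟩ (1:ℝ)) - f 0)
    have : ‖(1:ℝ)‖ = 1 := by norm_num
    rw [this, mul_one] at h
    linarith
  -- f is continuous
  have hfc : Continuous f := by
    have hl : LipschitzWith (Real.toNNReal L) f := by
      refine LipschitzWith.of_dist_le_mul fun a b => ?_
      rw [Real.dist_eq, dist_eq_norm]
      calc |f a - f b| ≤ L * ‖a - b‖ := hLip a b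
        _ = (Real.toNNReal L : ℝ) * ‖a - b‖ := by rw [Real.coe_toNNReal L hL0]
    exact hl.continuous
  -- abbreviations & positivity of constants
  have hSpos : 0 < (d:ℝ) * (volume (Metric.ball (0:En d) 1)).toReal := by
    have h1 : 0 < volume (Metric.ball (0:En d) 1) := Metric.measure_ball_pos _ _ one_pos
    have h2 : volume (Metric.ball (0:En d) 1) < ⊤ := measure_ball_lt_top
    have h3 := ENNReal.toReal_pos h1.ne' h2.ne
    positivity
  have hpcfp : 0 < pcf d (-(L * ρ)) := aux_pcf_pos hd _
  have hpcfm : 0 < pcf d (L * ρ) := aux_pcf_pos hd _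
  set K : ℝ := ((d : ℝ) * (volume (Metric.ball (0 : En d) 1)).toReal) * ρ ^ d *
      (Real.Gamma d * Real.exp (L ^ 2 * ρ ^ 2 / 4)) with hK
  have hKpos : 0 < K := by
    rw [hK]
    have := Real.exp_pos (L ^ 2 * ρ ^ 2 / 4)
    positivity
  -- the two Gaussian-type integrals
  have hJpEq : (∫ z : En d, Real.exp (L * ‖z‖ - ‖z‖ ^ 2 / (2 * ρ ^ 2)))
      = K * pcf d (-(L * ρ)) := by
    rw [aux_J_eq hd hρ L, aux_A_eq_pcf hd (L * ρ), hK,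
      show ((L * ρ) ^ 2 / 4 : ℝ) = L ^ 2 * ρ ^ 2 / 4 by ring]
    ring
  have hJmEq : (∫ z : En d, Real.exp (-L * ‖z‖ - ‖z‖ ^ 2 / (2 * ρ ^ 2)))
      = K * pcf d (L * ρ) := by
    rw [aux_J_eq hd hρ (-L), aux_A_eq_pcf hd (-L * ρ), hK,
      show ((-L * ρ) ^ 2 / 4 : ℝ) = L ^ 2 * ρ ^ 2 / 4 by ring,
      show (-(-L * ρ) : ℝ) = L * ρ by ring]
    ring
  have hJpPos : 0 < ∫ z : En d, Real.exp (L * ‖z‖ - ‖z‖ ^ 2 / (2 * ρ ^ 2)) := by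
    rw [hJpEq]; positivity
  have hJmPos : 0 < ∫ z : En d, Real.exp (-L * ‖z‖ - ‖z‖ ^ 2 / (2 * ρ ^ 2)) := by
    rw [hJmEq]; positivity
  -- translation + pointwise bounds
  have hIeq : (∫ z : En d, Real.exp (-f z - ‖z - θ‖ ^ 2 / (2 * ρ ^ 2)))
      = ∫ w : En d, Real.exp (-f (w + θ) - ‖w‖ ^ 2 / (2 * ρ ^ 2)) := by
    rw [← MeasureTheory.integral_add_right_eq_self
      (fun z : En d => Real.exp (-f z - ‖z - θ‖ ^ 2 / (2 * ρ ^ 2))) θ]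
    congr 1 with w
    rw [add_sub_cancel_right]
  have hub : ∀ w : En d, Real.exp (-f (w + θ) - ‖w‖ ^ 2 / (2 * ρ ^ 2))
      ≤ Real.exp (-f θ) * Real.exp (L * ‖w‖ - ‖w‖ ^ 2 / (2 * ρ ^ 2)) := by
    intro w
    rw [← Real.exp_add, Real.exp_le_exp]
    have h := hLip (w + θ) θ
    rw [add_sub_cancel_right] at h
    have h2 := abs_le.mp h
    linarith [h2.1, h2.2]
  have hlb : ∀ w : En d, Real.exp (-f θ) * Real.exp (-L * ‖w‖ - ‖w‖ ^ 2 / (2 * ρ ^ 2))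
      ≤ Real.exp (-f (w + θ) - ‖w‖ ^ 2 / (2 * ρ ^ 2)) := by
    intro w
    rw [← Real.exp_add, Real.exp_le_exp]
    have h := hLip (w + θ) θ
    rw [add_sub_cancel_right] at h
    have h2 := abs_le.mp h
    linarith [h2.1, h2.2]
  have hGcont : Continuous fun w : En d => Real.exp (-f (w + θ) - ‖w‖ ^ 2 / (2 * ρ ^ 2)) := by
    apply Real.continuous_exp.comp
    exact ((hfc.comp (continuous_id.add continuous_const)).neg).sub
      ((continuous_norm.pow 2).div_const (2 * ρ ^ 2))
  have hGint : Integrable (fun w : En d => Real.exp (-f (w + θ) - ‖w‖ ^ 2 / (2 * ρ ^ 2))) := by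
    refine ((aux_J_integrable hρ L).const_mul (Real.exp (-f θ))).mono'
      hGcont.aestronglyMeasurable (Filter.Eventually.of_forall fun w => ?_)
    rw [Real.norm_eq_abs, abs_of_pos (Real.exp_pos _)]
    exact hub w
  -- bounds on the main integral
  have hAub : (∫ z : En d, Real.exp (-f z - ‖z - θ‖ ^ 2 / (2 * ρ ^ 2)))
      ≤ Real.exp (-f θ) * ∫ z : En d, Real.exp (L * ‖z‖ - ‖z‖ ^ 2 / (2 * ρ ^ 2)) := by
    rw [hIeq, ← MeasureTheory.integral_const_mul]
    exact integral_mono hGint ((aux_J_integrable hρ L).const_mul _) hub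
  have hAlb : Real.exp (-f θ) * (∫ z : En d, Real.exp (-L * ‖z‖ - ‖z‖ ^ 2 / (2 * ρ ^ 2)))
      ≤ ∫ z : En d, Real.exp (-f z - ‖z - θ‖ ^ 2 / (2 * ρ ^ 2)) := by
    rw [hIeq, ← MeasureTheory.integral_const_mul]
    exact integral_mono ((aux_J_integrable hρ (-L)).const_mul _) hGint hlb
  have hApos : 0 < ∫ z : En d, Real.exp (-f z - ‖z - θ‖ ^ 2 / (2 * ρ ^ 2)) :=
    lt_of_lt_of_le (by positivity) hAlb
  -- logarithmic bounds
  have hlogub : Real.log (∫ z : En d, Real.exp (-f z - ‖z - θ‖ ^ 2 / (2 * ρ ^ 2)))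
      ≤ -f θ + (Real.log K + Real.log (pcf d (-(L * ρ)))) := by
    calc Real.log (∫ z : En d, Real.exp (-f z - ‖z - θ‖ ^ 2 / (2 * ρ ^ 2)))
        ≤ Real.log (Real.exp (-f θ) *
            ∫ z : En d, Real.exp (L * ‖z‖ - ‖z‖ ^ 2 / (2 * ρ ^ 2))) :=
          Real.log_le_log hApos hAub
      _ = -f θ + (Real.log K + Real.log (pcf d (-(L * ρ)))) := by
          rw [Real.log_mul (Real.exp_ne_zero _) hJpPos.ne', Real.log_exp, hJpEq,
            Real.log_mul hKpos.ne' hpcfp.ne']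
  have hloglb : -f θ + (Real.log K + Real.log (pcf d (L * ρ)))
      ≤ Real.log (∫ z : En d, Real.exp (-f z - ‖z - θ‖ ^ 2 / (2 * ρ ^ 2))) := by
    calc -f θ + (Real.log K + Real.log (pcf d (L * ρ)))
        = Real.log (Real.exp (-f θ) *
            ∫ z : En d, Real.exp (-L * ‖z‖ - ‖z‖ ^ 2 / (2 * ρ ^ 2))) := by
          rw [Real.log_mul (Real.exp_ne_zero _) hJmPos.ne', Real.log_exp, hJmEq,
            Real.log_mul hKpos.ne' hpcfm.ne']
      _ ≤ _ := Real.log_le_log (by positivity) hAlb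
  -- the constant identity
  have hNpos : 0 < N := by
    rw [hN]
    have := Real.exp_pos (L ^ 2 * ρ ^ 2 / 4)
    have h2 : (0:ℝ) < 2 ^ ((d : ℝ) / 2 - 1) := Real.rpow_pos_of_pos (by norm_num) _
    positivity
  have hNK : N * K = (2 * π * ρ ^ 2) ^ ((d : ℝ) / 2) := by
    rw [hN, hK]
    exact aux_NC hd hρ
  have hlogNK : Real.log N + Real.log K = ((d:ℝ)/2) * Real.log (2 * π * ρ ^ 2) := by
    rw [← Real.log_mul hNpos.ne' hKpos.ne', hNK, Real.log_rpow (by positivity)]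
  simp only [hfρ]
  constructor
  · linarith [hlogub, hlogNK]
  · linarith [hloglb, hlogNK]
end
end

section
/- Let d ≥ 1, ρ > 0, and let f : ℝ^d → ℝ be L-Lipschitz. Then for every θ ∈ ℝ^d, ∫_{ℝ^d} exp(f(θ) − f(z) − ‖θ − z‖₂²/(2ρ²)) dz ≤ A(ρ), where A(ρ) := (2 π^{d/2} ρ^d Γ(d) exp(L² ρ²/4) / Γ(d/2)) · D_{−d}(−Lρ). -/
open MeasureTheory

noncomputable section

lemma gauss_integrable (d : ℕ) {b : ℝ} (hb : 0 < b) :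
    Integrable (fun x : En d => Real.exp (-b * ‖x‖ ^ 2)) := by
  have h := (GaussianFourier.integrable_cexp_neg_mul_sq_norm_add (V := En d)
    (b := (b : ℂ)) (by simpa using hb) 0 0).norm
  refine h.congr ?_
  filter_upwards with x
  simp [Complex.norm_exp, ← Complex.ofReal_pow]

lemma radial_integrable (d : ℕ) {ρ : ℝ} (hρ : 0 < ρ) (L : ℝ) :
    Integrable (fun x : En d => Real.exp (L * ‖x‖ - ‖x‖ ^ 2 / (2 * ρ ^ 2))) := by
  have hb : (0 : ℝ) < 1 / (4 * ρ ^ 2) := by positivity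
  refine ((gauss_integrable d hb).const_mul (Real.exp (L ^ 2 * ρ ^ 2))).mono'
    (Continuous.aestronglyMeasurable (by fun_prop)) ?_
  filter_upwards with x
  rw [Real.norm_eq_abs, abs_of_nonneg (Real.exp_pos _).le, ← Real.exp_add]
  apply Real.exp_le_exp.2
  have e : L ^ 2 * ρ ^ 2 + -(1 / (4 * ρ ^ 2)) * ‖x‖ ^ 2 -
      (L * ‖x‖ - ‖x‖ ^ 2 / (2 * ρ ^ 2)) = (2 * ρ ^ 2 * L - ‖x‖) ^ 2 / (4 * ρ ^ 2) := by
    field_simp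
    ring
  have hnn : (0:ℝ) ≤ (2 * ρ ^ 2 * L - ‖x‖) ^ 2 / (4 * ρ ^ 2) :=
    div_nonneg (sq_nonneg _) (by positivity)
  linarith

lemma subst_lemma (d : ℕ) (hd : 1 ≤ d) {ρ : ℝ} (hρ : 0 < ρ) (L : ℝ) :
    (∫ r in Set.Ioi (0:ℝ), r ^ (d-1) * Real.exp (L * r - r ^ 2 / (2 * ρ ^ 2))) =
      ρ ^ d * ∫ x in Set.Ioi (0:ℝ), Real.exp (-(x * -(L * ρ)) - x ^ 2 / 2) * x ^ (d - 1) := by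
  have h := integral_comp_mul_left_Ioi
    (fun r => r ^ (d-1) * Real.exp (L * r - r ^ 2 / (2 * ρ ^ 2))) 0 hρ
  rw [mul_zero, smul_eq_mul] at h
  have h2 : (∫ x in Set.Ioi (0:ℝ),
      (ρ * x) ^ (d-1) * Real.exp (L * (ρ * x) - (ρ * x) ^ 2 / (2 * ρ ^ 2)))
      = ρ ^ (d-1) * ∫ x in Set.Ioi (0:ℝ),
        Real.exp (-(x * -(L * ρ)) - x ^ 2 / 2) * x ^ (d - 1) := by
    rw [← integral_const_mul]
    refine setIntegral_congr_fun measurableSet_Ioi fun x _ => ?_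
    have hρ' : ρ ≠ 0 := hρ.ne'
    have : L * (ρ * x) - (ρ * x) ^ 2 / (2 * ρ ^ 2) = -(x * -(L * ρ)) - x ^ 2 / 2 := by
      field_simp
    rw [this, mul_pow]
    ring
  rw [h2] at h
  have hmain : (∫ r in Set.Ioi (0:ℝ), r ^ (d-1) * Real.exp (L * r - r ^ 2 / (2 * ρ ^ 2)))
      = ρ * (ρ ^ (d-1) * ∫ x in Set.Ioi (0:ℝ),
        Real.exp (-(x * -(L * ρ)) - x ^ 2 / 2) * x ^ (d - 1)) := by
    rw [h, ← mul_assoc, mul_inv_cancel₀ hρ.ne', one_mul]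
  rw [hmain, ← mul_assoc, ← pow_succ']
  congr 2
  omega

/-- Upper bound on the smoothing integral: for an `L`-Lipschitz `f`,
`∫ exp(f(θ) − f(z) − ‖θ−z‖²/(2ρ²)) dz ≤ A(ρ)` where
`A(ρ) = (2 π^{d/2} ρ^d Γ(d) exp(L²ρ²/4)/Γ(d/2)) D_{−d}(−Lρ)`. -/
theorem statement13 {d : ℕ} (hd : 1 ≤ d) (ρ : ℝ) (hρ : 0 < ρ) (f : En d → ℝ) (L : ℝ)
    (hLip : ∀ θ η : En d, |f θ - f η| ≤ L * ‖θ - η‖) (θ : En d) :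
    (∫ z : En d, Real.exp (f θ - f z - ‖θ - z‖ ^ 2 / (2 * ρ ^ 2))) ≤
      2 * Real.pi ^ ((d : ℝ) / 2) * ρ ^ d * Real.Gamma d * Real.exp (L ^ 2 * ρ ^ 2 / 4) /
        Real.Gamma ((d : ℝ) / 2) * pcf d (-(L * ρ)) := by
  haveI : NeZero d := ⟨by omega⟩
  set g : ℝ → ℝ := fun r => Real.exp (L * r - r ^ 2 / (2 * ρ ^ 2)) with hg
  have hint : Integrable (fun x : En d => g ‖x‖) := radial_integrable d hρ L
  have hint' : Integrable (fun z : En d => g ‖θ - z‖) := by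
    have := (Measure.measurePreserving_sub_left (volume : Measure (En d)) θ).integrable_comp
      hint.aestronglyMeasurable
    exact this.mpr hint
  have h1 : (∫ z : En d, Real.exp (f θ - f z - ‖θ - z‖ ^ 2 / (2 * ρ ^ 2))) ≤
      ∫ z : En d, g ‖θ - z‖ := by
    refine integral_mono_of_nonneg (Filter.Eventually.of_forall fun z => (Real.exp_pos _).le)
      hint' (Filter.Eventually.of_forall fun z => ?_)
    apply Real.exp_le_exp.2
    have := (abs_le.1 (hLip θ z)).2
    linarith [(le_abs_self (f θ - f z)).trans (hLip θ z)]
  refine h1.trans_eq ?_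
  -- now the equality
  have e1 : (∫ z : En d, g ‖θ - z‖) = ∫ x : En d, g ‖x‖ :=
    integral_sub_left_eq_self (fun x => g ‖x‖) volume θ
  have e2 : (∫ x : En d, g ‖x‖) =
      (d : ℝ) * (volume (Metric.ball (0 : En d) 1)).toReal *
        ∫ r in Set.Ioi (0:ℝ), r ^ (d-1) * g r := by
    rw [integral_fun_norm_addHaar (volume : Measure (En d)) g]
    simp only [finrank_euclideanSpace_fin, nsmul_eq_mul, smul_eq_mul, mul_assoc, measureReal_def]
  have hball : (volume (Metric.ball (0 : En d) 1)).toReal =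
      Real.pi ^ ((d : ℝ) / 2) / Real.Gamma ((d : ℝ) / 2 + 1) := by
    rw [EuclideanSpace.volume_ball]
    simp only [Fintype.card_fin, ENNReal.ofReal_one, one_pow, one_mul]
    rw [ENNReal.toReal_ofReal (by positivity)]
    congr 1
    rw [Real.sqrt_eq_rpow, ← Real.rpow_natCast (Real.pi ^ ((1:ℝ)/2)) d,
      ← Real.rpow_mul Real.pi_pos.le]
    congr 1
    ring
  rw [e1, e2, hball]
  have hsub := subst_lemma d hd hρ L
  simp only [hg]
  rw [hsub, pcf]
  have hd0 : (0:ℝ) < (d:ℝ) := by exact_mod_cast Nat.pos_of_ne_zero (by omega)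
  have hΓd : Real.Gamma (d:ℝ) ≠ 0 := (Real.Gamma_pos_of_pos hd0).ne'
  have hΓ2 : Real.Gamma ((d:ℝ)/2) ≠ 0 := (Real.Gamma_pos_of_pos (by positivity)).ne'
  have hΓa : Real.Gamma ((d:ℝ)/2 + 1) = ((d:ℝ)/2) * Real.Gamma ((d:ℝ)/2) :=
    Real.Gamma_add_one (by positivity)
  have hE2 : Real.exp (-(-(L * ρ)) ^ 2 / 4) = (Real.exp (L ^ 2 * ρ ^ 2 / 4))⁻¹ := by
    rw [← Real.exp_neg]
    congr 1
    ring
  rw [hΓa, hE2]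
  have hE : Real.exp (L ^ 2 * ρ ^ 2 / 4) ≠ 0 := Real.exp_ne_zero _
  field_simp
end
end

section
/- Let d ≥ 1, ρ > 0, and let f : ℝ^d → ℝ be L-Lipschitz. Then for every θ ∈ ℝ^d, ∫_{ℝ^d} exp(f(θ) − f(z) − ‖θ − z‖₂²/(2ρ²)) dz ≥ B(ρ), where B(ρ) := (2 π^{d/2} ρ^d Γ(d) exp(L² ρ²/4) / Γ(d/2)) · D_{−d}(Lρ). -/
open MeasureTheory

noncomputable section

lemma integrable_gaussEn (d : ℕ) {b : ℝ} (hb : 0 < b) :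
    Integrable (fun v : En d => Real.exp (-b * ‖v‖ ^ 2)) := by
  have h := (GaussianFourier.integrable_cexp_neg_mul_sq_norm_add (V := En d)
    (b := (b : ℂ)) (by simpa using hb) 0 0).norm
  refine h.congr ?_
  filter_upwards with v
  rw [zero_mul, add_zero, Complex.norm_exp]
  congr 1
  have : ((-b : ℂ) * (‖v‖ : ℂ) ^ 2) = ((-b * ‖v‖ ^ 2 : ℝ) : ℂ) := by push_cast; ring
  rw [this, Complex.ofReal_re]

set_option maxHeartbeats 2000000 in
/-- Lower bound on the smoothing integral: for an `L`-Lipschitz `f`,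
`∫ exp(f(θ) − f(z) − ‖θ−z‖²/(2ρ²)) dz ≥ B(ρ)` where
`B(ρ) = (2 π^{d/2} ρ^d Γ(d) exp(L²ρ²/4)/Γ(d/2)) D_{−d}(Lρ)`. -/
theorem statement14 {d : ℕ} (hd : 1 ≤ d) (ρ : ℝ) (hρ : 0 < ρ) (f : En d → ℝ) (L : ℝ)
    (hLip : ∀ θ η : En d, |f θ - f η| ≤ L * ‖θ - η‖) (θ : En d) :
    2 * Real.pi ^ ((d : ℝ) / 2) * ρ ^ d * Real.Gamma d * Real.exp (L ^ 2 * ρ ^ 2 / 4) /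
        Real.Gamma ((d : ℝ) / 2) * pcf d (L * ρ) ≤
      ∫ z : En d, Real.exp (f θ - f z - ‖θ - z‖ ^ 2 / (2 * ρ ^ 2)) := by
  have hne : Nonempty (Fin d) := ⟨⟨0, hd⟩⟩
  haveI : Nontrivial (En d) := by
    refine Module.nontrivial_of_finrank_pos (R := ℝ) ?_
    rw [finrank_euclideanSpace]
    simpa using (show 0 < d by omega)
  -- L is nonnegative
  have hL : 0 ≤ L := by
    obtain ⟨x, y, hxy⟩ := exists_pair_ne (En d)
    have h1 := hLip x y
    have h2 : (0:ℝ) < ‖x - y‖ := by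
      rw [norm_pos_iff]; exact sub_ne_zero.mpr hxy
    nlinarith [abs_nonneg (f x - f y)]
  -- f is continuous
  have hfc : Continuous f := by
    have : LipschitzWith (Real.toNNReal L) f := LipschitzWith.of_dist_le_mul fun x y => by
      rw [Real.dist_eq, dist_eq_norm, Real.coe_toNNReal L hL]; exact hLip x y
    exact this.continuous
  -- the radial lower-bound function
  set g : ℝ → ℝ := fun r => Real.exp (-(L * r) - r ^ 2 / (2 * ρ ^ 2)) with hg
  -- integrability of the radial lower bound composed with the norm
  have hgint : Integrable (fun w : En d => g ‖w‖) := by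
    refine (integrable_gaussEn d (b := 1 / (2 * ρ ^ 2)) (by positivity)).mono' ?_ ?_
    · exact (Real.continuous_exp.comp (by continuity)).aestronglyMeasurable
    · filter_upwards with w
      rw [Real.norm_eq_abs, abs_of_pos (Real.exp_pos _)]
      apply Real.exp_le_exp.mpr
      have h1 : 0 ≤ L * ‖w‖ := mul_nonneg hL (norm_nonneg _)
      have h2 : ‖w‖ ^ 2 / (2 * ρ ^ 2) = 1 / (2 * ρ ^ 2) * ‖w‖ ^ 2 := by ring
      rw [h2]; linarith
  -- integrability of the target integrand
  have hhint : Integrable (fun z : En d =>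
      Real.exp (f θ - f z - ‖θ - z‖ ^ 2 / (2 * ρ ^ 2))) := by
    have hdom : Integrable (fun z : En d =>
        Real.exp (L ^ 2 * ρ ^ 2) *
          Real.exp (-(1 / (4 * ρ ^ 2)) * ‖θ - z‖ ^ 2)) :=
      ((integrable_gaussEn d (b := 1 / (4 * ρ ^ 2))
        (by positivity)).comp_sub_left θ).const_mul _
    refine hdom.mono' ((Real.continuous_exp.comp (by continuity)).aestronglyMeasurable) ?_
    filter_upwards with z
    rw [Real.norm_eq_abs, abs_of_pos (Real.exp_pos _), ← Real.exp_add]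
    apply Real.exp_le_exp.mpr
    have h1 : f θ - f z ≤ L * ‖θ - z‖ := (abs_le.mp (hLip θ z)).2
    set r : ℝ := ‖θ - z‖ with hr
    have e1 : r ^ 2 / (2 * ρ ^ 2) = 2 * (r / (2 * ρ)) ^ 2 := by
      field_simp
    have e2 : -(1 / (4 * ρ ^ 2)) * r ^ 2 = -((r / (2 * ρ)) ^ 2) := by
      rw [div_pow, mul_pow]; ring
    have e3 : L * r = 2 * (L * ρ) * (r / (2 * ρ)) := by
      field_simp
    rw [e1, e2]
    nlinarith [sq_nonneg (L * ρ - r / (2 * ρ))]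
  -- pointwise bound and monotonicity
  have hmono : ∫ z : En d, g ‖θ - z‖ ≤
      ∫ z : En d, Real.exp (f θ - f z - ‖θ - z‖ ^ 2 / (2 * ρ ^ 2)) := by
    refine integral_mono (hgint.comp_sub_left θ) hhint fun z => ?_
    apply Real.exp_le_exp.mpr
    have h1 : -(L * ‖θ - z‖) ≤ f θ - f z := (abs_le.mp (hLip θ z)).1
    linarith
  -- translation invariance
  have htrans : ∫ z : En d, g ‖θ - z‖ = ∫ w : En d, g ‖w‖ :=
    integral_sub_left_eq_self (fun w : En d => g ‖w‖) volume θ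
  -- radial integration
  have hrad : ∫ w : En d, g ‖w‖ =
      (d : ℝ) * (Real.sqrt Real.pi ^ d / Real.Gamma ((d : ℝ) / 2 + 1)) *
        ∫ y in Set.Ioi (0 : ℝ), y ^ (d - 1) * g y := by
    have h := integral_fun_norm_addHaar (volume : Measure (En d)) g
    rw [finrank_euclideanSpace] at h
    simp only [Fintype.card_fin] at h
    rw [h, nsmul_eq_mul, smul_eq_mul]
    have hvol : (volume (Metric.ball (0 : En d) 1)).toReal =
        Real.sqrt Real.pi ^ d / Real.Gamma ((d : ℝ) / 2 + 1) := by
      rw [EuclideanSpace.volume_ball, Fintype.card_fin, ENNReal.ofReal_one, one_pow, one_mul,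
        ENNReal.toReal_ofReal]
      have : 0 < Real.Gamma ((d : ℝ) / 2 + 1) :=
        Real.Gamma_pos_of_pos (by positivity)
      positivity
    rw [measureReal_def, hvol]
    simp_rw [smul_eq_mul]
    ring
  -- change of variables r = ρ x
  have hcov : ∫ y in Set.Ioi (0 : ℝ), y ^ (d - 1) * g y =
      ρ ^ d * ∫ x in Set.Ioi (0 : ℝ),
        Real.exp (-(x * (L * ρ)) - x ^ 2 / 2) * x ^ (d - 1) := by
    have h := integral_comp_mul_left_Ioi (fun y : ℝ => y ^ (d - 1) * g y) 0 hρ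
    rw [mul_zero] at h
    simp only [smul_eq_mul] at h
    have h' : ∫ y in Set.Ioi (0 : ℝ), y ^ (d - 1) * g y =
        ρ * ∫ x in Set.Ioi (0 : ℝ), (ρ * x) ^ (d - 1) * g (ρ * x) := by
      rw [h, ← mul_assoc, mul_inv_cancel₀ hρ.ne', one_mul]
    rw [h']
    have hint_eq : ∀ x : ℝ, (ρ * x) ^ (d - 1) * g (ρ * x) =
        ρ ^ (d - 1) * (Real.exp (-(x * (L * ρ)) - x ^ 2 / 2) * x ^ (d - 1)) := by
      intro x
      have e : -(L * (ρ * x)) - (ρ * x) ^ 2 / (2 * ρ ^ 2) =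
          -(x * (L * ρ)) - x ^ 2 / 2 := by
        field_simp
      simp only [g]
      rw [e, mul_pow]
      ring
    simp_rw [hint_eq]
    rw [integral_const_mul, ← mul_assoc]
    congr 1
    rw [← pow_succ', Nat.sub_add_cancel hd]
  -- the constant identity
  have hΓd : Real.Gamma (d : ℝ) ≠ 0 :=
    (Real.Gamma_pos_of_pos (by exact_mod_cast hd.trans_lt' zero_lt_one : (0:ℝ) < d)).ne'
  have hΓ2 : (0:ℝ) < Real.Gamma ((d : ℝ) / 2) := by
    apply Real.Gamma_pos_of_pos
    have : (0:ℝ) < (d : ℝ) := by exact_mod_cast hd.trans_lt' zero_lt_one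
    positivity
  have hsq : Real.sqrt Real.pi ^ d = Real.pi ^ ((d : ℝ) / 2) := by
    rw [Real.sqrt_eq_rpow, ← Real.rpow_natCast (Real.pi ^ (1/2 : ℝ)) d,
      ← Real.rpow_mul Real.pi_pos.le]
    congr 1
    ring
  have hΓ1 : Real.Gamma ((d : ℝ) / 2 + 1) = ((d : ℝ) / 2) * Real.Gamma ((d : ℝ) / 2) := by
    rw [Real.Gamma_add_one]
    have : (0:ℝ) < (d : ℝ) := by exact_mod_cast hd.trans_lt' zero_lt_one
    positivity
  have hd0 : ((d : ℝ)) ≠ 0 := by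
    have : (0:ℝ) < (d : ℝ) := by exact_mod_cast hd.trans_lt' zero_lt_one
    exact this.ne'
  have hconst :
      2 * Real.pi ^ ((d : ℝ) / 2) * ρ ^ d * Real.Gamma d * Real.exp (L ^ 2 * ρ ^ 2 / 4) /
          Real.Gamma ((d : ℝ) / 2) * pcf d (L * ρ) =
        (d : ℝ) * (Real.sqrt Real.pi ^ d / Real.Gamma ((d : ℝ) / 2 + 1)) *
          (ρ ^ d * ∫ x in Set.Ioi (0 : ℝ),
            Real.exp (-(x * (L * ρ)) - x ^ 2 / 2) * x ^ (d - 1)) := by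
    rw [pcf, hsq, hΓ1]
    have e : (-(L * ρ) ^ 2 / 4 : ℝ) = -(L ^ 2 * ρ ^ 2 / 4) := by ring
    rw [e, Real.exp_neg]
    field_simp
  calc 2 * Real.pi ^ ((d : ℝ) / 2) * ρ ^ d * Real.Gamma d * Real.exp (L ^ 2 * ρ ^ 2 / 4) /
        Real.Gamma ((d : ℝ) / 2) * pcf d (L * ρ)
      = (d : ℝ) * (Real.sqrt Real.pi ^ d / Real.Gamma ((d : ℝ) / 2 + 1)) *
          (ρ ^ d * ∫ x in Set.Ioi (0 : ℝ),
            Real.exp (-(x * (L * ρ)) - x ^ 2 / 2) * x ^ (d - 1)) := hconst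
    _ = (d : ℝ) * (Real.sqrt Real.pi ^ d / Real.Gamma ((d : ℝ) / 2 + 1)) *
          ∫ y in Set.Ioi (0 : ℝ), y ^ (d - 1) * g y := by rw [hcov]
    _ = ∫ w : En d, g ‖w‖ := hrad.symm
    _ = ∫ z : En d, g ‖θ - z‖ := htrans.symm
    _ ≤ _ := hmono
end
end
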